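/- Let G be a finite simple graph with dominating ideal DI(G) and closed neighborhood ideal NI(G). Then a square-free monomial ∏_{i∈S} x_i lies in DI(G) if and only if S contains a dominating set of G, and the minimal primes of NI(G) are exactly the ideals (x_i : i ∈ S) for S a minimal dominating set of G. -/

import Mathlib

open MvPolynomial

variable {V : Type*} [Fintype V] (K : Type*) [Field K]

open scoped Classical in
/-- The monomial `∏_{j ∈ N[v]} x_j` of the closed neighborhood of `v`. -/
noncomputable def nbhdMonomial (G : SimpleGraph V) (v : V) : MvPolynomial V K :=
  X v * ∏ j ∈ Finset.univ.filter (fun j => G.Adj v j), X j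

/-- The closed neighborhood ideal of a graph. -/
noncomputable def NI (G : SimpleGraph V) : Ideal (MvPolynomial V K) :=
  Ideal.span (Set.range fun v => nbhdMonomial K G v)

/-- `S` is a dominating set of `G`. -/
def Dominates (G : SimpleGraph V) (S : Finset V) : Prop :=
  ∀ v : V, ∃ u ∈ S, u = v ∨ G.Adj v u

/-- `S` is a minimal dominating set of `G`. -/
def MinimalDominating (G : SimpleGraph V) (S : Finset V) : Prop :=
  Dominates G S ∧ ∀ T : Finset V, T ⊂ S → ¬ Dominates G T

/-- The dominating ideal of a graph. -/
noncomputable def DI (G : SimpleGraph V) : Ideal (MvPolynomial V K) :=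
  Ideal.span { m | ∃ S : Finset V, MinimalDominating G S ∧ m = ∏ i ∈ S, X i }

open scoped Classical

/-! ### Auxiliary lemmas -/

/-- The indicator multidegree of a finset. -/
noncomputable def indic (S : Finset V) : V →₀ ℕ := ∑ i ∈ S, Finsupp.single i 1

lemma indic_apply (S : Finset V) (j : V) : indic S j = if j ∈ S then 1 else 0 := by
  classical
  simp [indic, Finsupp.finset_sum_apply, Finsupp.single_apply, Finset.sum_ite_eq' S j fun _ => 1]

lemma prod_X_eq (S : Finset V) :
    (∏ i ∈ S, (X i : MvPolynomial V K)) = monomial (indic S) 1 := by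
  classical
  induction S using Finset.induction_on with
  | empty => simp [indic]
  | insert _ _ h ih =>
      rw [Finset.prod_insert h, ih, X, monomial_mul, one_mul, indic, indic,
        Finset.sum_insert h]

lemma indic_le_indic_iff {T S : Finset V} : indic T ≤ indic S ↔ T ⊆ S := by
  constructor
  · intro h i hi
    have := h i
    rw [indic_apply, indic_apply, if_pos hi] at this
    by_contra hc
    rw [if_neg hc] at this
    omega
  · intro h i
    rw [indic_apply, indic_apply]
    by_cases hi : i ∈ T
    · rw [if_pos hi, if_pos (h hi)]
    · simp [hi]

lemma X_mem_span_X_image_iff {S : Finset V} {i : V} :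
    (X i : MvPolynomial V K) ∈ Ideal.span ((X : V → MvPolynomial V K) '' (S : Set V)) ↔
      i ∈ S := by
  rw [mem_ideal_span_X_image]
  constructor
  · intro h
    obtain ⟨j, hj, hne⟩ := h (Finsupp.single i 1) (by simp [support_X])
    rw [Finsupp.single_apply] at hne
    rcases eq_or_ne i j with rfl | hij
    · exact_mod_cast hj
    · simp [hij] at hne
  · intro hi m hm
    rw [support_X, Finset.mem_singleton] at hm
    subst hm
    exact ⟨i, by exact_mod_cast hi, by simp⟩

lemma span_X_image_isPrime (S : Finset V) :
    (Ideal.span ((X : V → MvPolynomial V K) '' (S : Set V))).IsPrime := by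
  classical
  set φ : MvPolynomial V K →ₐ[K] MvPolynomial V K :=
    aeval (fun i => if i ∈ S then 0 else X i) with hφ
  have key : ∀ f : MvPolynomial V K,
      f - φ f ∈ Ideal.span ((X : V → MvPolynomial V K) '' (S : Set V)) := by
    intro f
    induction f using MvPolynomial.induction_on with
    | C a => simp [hφ]
    | add p q hp hq =>
        have : p + q - φ (p + q) = (p - φ p) + (q - φ q) := by
          rw [map_add]; ring
        rw [this]; exact Ideal.add_mem _ hp hq
    | mul_X p i hp =>
        by_cases hi : i ∈ S
        · have hXi : (X i : MvPolynomial V K) ∈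
              Ideal.span ((X : V → MvPolynomial V K) '' (S : Set V)) :=
            (X_mem_span_X_image_iff K).2 hi
          have : φ (p * X i) = 0 := by simp [hφ, aeval_X, if_pos hi]
          rw [this, sub_zero]
          exact Ideal.mul_mem_left _ _ hXi
        · have : p * X i - φ (p * X i) = (p - φ p) * X i := by
            rw [map_mul, hφ]; simp [aeval_X, if_neg hi]; ring
          rw [this]
          exact Ideal.mul_mem_right _ _ hp
  have hker : Ideal.span ((X : V → MvPolynomial V K) '' (S : Set V)) =
      RingHom.ker (φ : MvPolynomial V K →+* MvPolynomial V K) := by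
    apply le_antisymm
    · rw [Ideal.span_le]
      rintro _ ⟨i, hi, rfl⟩
      simp only [SetLike.mem_coe, RingHom.mem_ker, AlgHom.coe_toRingHom]
      simp [hφ, aeval_X, if_pos (by exact_mod_cast hi : i ∈ S)]
    · intro f hf
      rw [RingHom.mem_ker] at hf
      have := key f
      rw [show φ f = 0 from hf, sub_zero] at this
      exact this
  rw [hker]
  exact RingHom.ker_isPrime _

lemma NI_le_span_of_dominates {G : SimpleGraph V} {S : Finset V} (hS : Dominates G S) :
    NI K G ≤ Ideal.span ((X : V → MvPolynomial V K) '' (S : Set V)) := by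
  classical
  rw [NI, Ideal.span_le]
  rintro _ ⟨v, rfl⟩
  obtain ⟨u, hu, huv⟩ := hS v
  have hXu : (X u : MvPolynomial V K) ∈
      Ideal.span ((X : V → MvPolynomial V K) '' (S : Set V)) :=
    (X_mem_span_X_image_iff K).2 hu
  have hdvd : (X u : MvPolynomial V K) ∣ nbhdMonomial K G v := by
    rcases huv with rfl | hadj
    · exact Dvd.intro _ rfl
    · refine dvd_mul_of_dvd_right ?_ _
      exact Finset.dvd_prod_of_mem _ (by simp [hadj])
  obtain ⟨c, hc⟩ := hdvd
  simp only [SetLike.mem_coe]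
  rw [hc]
  exact Ideal.mul_mem_right _ _ hXu

lemma dominates_of_NI_le {G : SimpleGraph V} {p : Ideal (MvPolynomial V K)}
    (hp : p.IsPrime) (hle : NI K G ≤ p) :
    Dominates G (Finset.univ.filter (fun i => (X i : MvPolynomial V K) ∈ p)) := by
  classical
  intro v
  have hv : nbhdMonomial K G v ∈ p := hle (Ideal.subset_span ⟨v, rfl⟩)
  rw [nbhdMonomial] at hv
  rcases hp.mem_or_mem hv with h | h
  · exact ⟨v, by simp [h], Or.inl rfl⟩
  · rw [Ideal.IsPrime.prod_mem_iff] at h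
    obtain ⟨u, hu, hXu⟩ := h
    simp only [Finset.mem_filter, Finset.mem_univ, true_and] at hu
    exact ⟨u, by simp [hXu], Or.inr hu⟩

lemma exists_minimalDominating_subset {G : SimpleGraph V} {S : Finset V}
    (hS : Dominates G S) : ∃ T : Finset V, T ⊆ S ∧ MinimalDominating G T := by
  classical
  obtain ⟨T, ⟨hTS, hTdom⟩, hmin⟩ :=
    (Finset.wellFoundedLT.wf).has_min {T : Finset V | T ⊆ S ∧ Dominates G T} ⟨S, le_refl S, hS⟩
  refine ⟨T, hTS, hTdom, fun T' hT' hT'dom => ?_⟩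
  exact hmin T' ⟨hT'.subset.trans hTS, hT'dom⟩ hT'

/-- A square-free monomial `∏_{i ∈ S} x_i` lies in `DI(G)` iff `S` contains a dominating
set of `G`, and the minimal primes of `NI(G)` are exactly the ideals `(x_i : i ∈ S)` for
`S` a minimal dominating set of `G`. -/
theorem DI_membership_and_minimalPrimes_NI (G : SimpleGraph V) :
    (∀ S : Finset V,
      (∏ i ∈ S, (X i : MvPolynomial V K)) ∈ DI K G ↔ ∃ T : Finset V, T ⊆ S ∧ Dominates G T) ∧
    (NI K G).minimalPrimes =
      { p | ∃ S : Finset V, MinimalDominating G S ∧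
        p = Ideal.span ((X : V → MvPolynomial V K) '' (S : Set V)) } := by
  classical
  constructor
  · -- Part 1
    intro S
    have hgens : { m | ∃ T : Finset V, MinimalDominating G T ∧ m = ∏ i ∈ T, X i } =
        (fun d => monomial d (1 : K)) '' {d | ∃ T : Finset V, MinimalDominating G T ∧
          d = indic T} := by
      ext m
      constructor
      · rintro ⟨T, hT, rfl⟩
        exact ⟨indic T, ⟨T, hT, rfl⟩, (prod_X_eq K T).symm⟩
      · rintro ⟨d, ⟨T, hT, rfl⟩, rfl⟩
        exact ⟨T, hT, (prod_X_eq K T).symm⟩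
    rw [DI, hgens, prod_X_eq, mem_ideal_span_monomial_image]
    have hsupp : (monomial (indic S) (1 : K)).support = {indic S} := by
      rw [support_monomial, if_neg one_ne_zero]
    rw [hsupp]
    constructor
    · intro h
      obtain ⟨d, ⟨T, hT, rfl⟩, hle⟩ := h (indic S) (Finset.mem_singleton_self _)
      exact ⟨T, indic_le_indic_iff.1 hle, hT.1⟩
    · rintro ⟨T, hTS, hTdom⟩ m hm
      rw [Finset.mem_singleton] at hm
      subst hm
      obtain ⟨T', hT'T, hT'⟩ := exists_minimalDominating_subset hTdom
      exact ⟨indic T', ⟨T', hT', rfl⟩, indic_le_indic_iff.2 (hT'T.trans hTS)⟩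
  · -- Part 2
    ext p
    constructor
    · intro hp
      obtain ⟨⟨hprime, hle⟩, hmin⟩ := hp
      set Sp : Finset V := Finset.univ.filter (fun i => (X i : MvPolynomial V K) ∈ p) with hSp
      have hSpdom : Dominates G Sp := dominates_of_NI_le K hprime hle
      obtain ⟨T, hTSp, hTmin⟩ := exists_minimalDominating_subset hSpdom
      have hqle : Ideal.span ((X : V → MvPolynomial V K) '' (T : Set V)) ≤ p := by
        rw [Ideal.span_le]
        rintro _ ⟨i, hi, rfl⟩
        have : i ∈ Sp := hTSp (by exact_mod_cast hi)
        simpa [hSp] using this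
      refine ⟨T, hTmin, le_antisymm ?_ hqle⟩
      exact hmin ⟨span_X_image_isPrime K T, NI_le_span_of_dominates K hTmin.1⟩ hqle
    · rintro ⟨S, hS, rfl⟩
      refine ⟨⟨span_X_image_isPrime K S, NI_le_span_of_dominates K hS.1⟩, ?_⟩
      rintro q ⟨hqprime, hqle⟩ hqp
      set Sq : Finset V := Finset.univ.filter (fun i => (X i : MvPolynomial V K) ∈ q) with hSq
      have hSqdom : Dominates G Sq := dominates_of_NI_le K hqprime hqle
      have hSqS : Sq ⊆ S := by
        intro i hi
        have : (X i : MvPolynomial V K) ∈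
            Ideal.span ((X : V → MvPolynomial V K) '' (S : Set V)) := by
          apply hqp
          simpa [hSq] using hi
        exact (X_mem_span_X_image_iff K).1 this
      have hSqeq : Sq = S := by
        by_contra hne
        exact hS.2 Sq (ssubset_of_subset_of_ne hSqS hne) hSqdom
      rw [Ideal.span_le]
      rintro _ ⟨i, hi, rfl⟩
      have : i ∈ Sq := hSqeq ▸ (by exact_mod_cast hi : i ∈ S)
      simpa [hSq] using this
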